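/- For every t ≥ 0 and every s ∈ ℝ, the limit Υ(t,s) := lim_{n→∞} (1/n)·log Υ_n(t,s) exists in ℝ; moreover, for every t ≥ 0 there exists exactly one s ∈ ℝ such that Υ(t,s) = 0. -/

import Mathlib

open Filter MeasureTheory
open scoped BigOperators ENNReal NNReal Topology

namespace LGQ

noncomputable section

/-- The alphabet `G = {(i,j) : 1 ≤ i ≤ n_j, 1 ≤ j ≤ m}`, encoded as a sigma type:
an element is `⟨j, i⟩` with `j : Fin m` (the `y`-coordinate) and `i : Fin (n j)`. -/
abbrev Alph (m : ℕ) (n : Fin m → ℕ) := Σ j : Fin m, Fin (n j)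

/-- A pair `σ = (σ_L, σ_R)` with `σ_L ∈ G^*` and `σ_R ∈ G_y^*`. -/
abbrev Wd (m : ℕ) (n : Fin m → ℕ) := List (Alph m n) × List (Fin m)

variable {m : ℕ} {n : Fin m → ℕ}

/-- `a_ω := ∏ a_{i_h j_h}` along a word `ω ∈ G^*`. -/
def aP (a : Alph m n → ℝ) (w : List (Alph m n)) : ℝ := (w.map a).prod

/-- `b_τ := ∏ b_{j_h}` along a word `τ ∈ G_y^*`. -/
def bP (b : Fin m → ℝ) (τ : List (Fin m)) : ℝ := (τ.map b).prod

/-- `σ_y := (σ_L)_y ∗ σ_R` : the `y`-word of a pair `σ = σ_L ∗ σ_R`. -/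
def sy (σ : Wd m n) : List (Fin m) := σ.1.map Sigma.fst ++ σ.2

/-- `Ψ_l := {σ = σ_L ∗ σ_R : σ_L ∈ G^l, σ_R ∈ G_y^*, b_{(σ_y)^-} ≥ a_{σ_L} > b_{σ_y}}`. -/
def Psi (a : Alph m n → ℝ) (b : Fin m → ℝ) (l : ℕ) : Set (Wd m n) :=
  {σ | σ.1.length = l ∧ 1 ≤ σ.2.length ∧
    aP a σ.1 ≤ bP b (sy σ).dropLast ∧ bP b (sy σ) < aP a σ.1}

/-- `Ψ^* := ⋃_{l ≥ 1} Ψ_l`. -/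
def PsiStar (a : Alph m n → ℝ) (b : Fin m → ℝ) : Set (Wd m n) :=
  {σ | ∃ l, 1 ≤ l ∧ σ ∈ Psi a b l}

/-- `q_j := Σ_{i=1}^{n_j} p_{ij}`. -/
def qf (p : Alph m n → ℝ) (j : Fin m) : ℝ := ∑ i : Fin (n j), p ⟨j, i⟩

/-- `p_{σ_L} := ∏ p_{i_h j_h}`. -/
def pP (p : Alph m n → ℝ) (w : List (Alph m n)) : ℝ := (w.map p).prod

/-- `q_{σ_R} := ∏ q_{j_h}`. -/
def qP (p : Alph m n → ℝ) (τ : List (Fin m)) : ℝ := (τ.map (qf p)).prod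

/-- `E_r(σ) := p_{σ_L} q_{σ_R} a_{σ_L}^r` (note `E_r(θ) = 1`). -/
def Er (a p : Alph m n → ℝ) (r : ℝ) (σ : Wd m n) : ℝ :=
  pP p σ.1 * qP p σ.2 * aP a σ.1 ^ r

/-- `a̲ := min a_{ij}`. -/
def aLo (a : Alph m n → ℝ) : ℝ := ⨅ g, a g

/-- `ā := max a_{ij}`. -/
def aHi (a : Alph m n → ℝ) : ℝ := ⨆ g, a g

/-- `b̲ := min b_j`. -/
def bLo (b : Fin m → ℝ) : ℝ := ⨅ j, b j

/-- `b̄ := max b_j`. -/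
def bHi (b : Fin m → ℝ) : ℝ := ⨆ j, b j

/-- `p̲ := min p_{ij}`. -/
def pLo (p : Alph m n → ℝ) : ℝ := ⨅ g, p g

/-- `q̲ := min q_j`. -/
def qLo (p : Alph m n → ℝ) : ℝ := ⨅ j, qf p j

/-- `A_1 := ⌊log a̲ / log b̄⌋ + 1`. -/
def A1 (a : Alph m n → ℝ) (b : Fin m → ℝ) : ℤ :=
  ⌊Real.log (aLo a) / Real.log (bHi b)⌋ + 1

/-- `A_2 := ⌊log b̲ / log ā⌋ + 1`. -/
def A2 (a : Alph m n → ℝ) (b : Fin m → ℝ) : ℤ :=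
  ⌊Real.log (bLo b) / Real.log (aHi a)⌋ + 1

/-- `A_3 := max_{(i,j)∈G} a_{ij}/b_j`. -/
def A3 (a : Alph m n → ℝ) (b : Fin m → ℝ) : ℝ := ⨆ g : Alph m n, a g / b g.1

/-- `A_4 := log A_3 / log b̲`. -/
def A4 (a : Alph m n → ℝ) (b : Fin m → ℝ) : ℝ := Real.log (A3 a b) / Real.log (bLo b)

/-- `A_6 := ⌊1/A_4⌋`. -/
def A6 (a : Alph m n → ℝ) (b : Fin m → ℝ) : ℤ := ⌊1 / A4 a b⌋

/-- `η̲_r := p̲ q̲^{A_1} a̲^r`. -/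
def etaLo (a : Alph m n → ℝ) (b : Fin m → ℝ) (p : Alph m n → ℝ) (r : ℝ) : ℝ :=
  pLo p * qLo p ^ A1 a b * aLo a ^ r

/-- `A_{5,r} := ⌊log(q̲² η̲_r)/(r·log ā)⌋`. -/
def A5 (a : Alph m n → ℝ) (b : Fin m → ℝ) (p : Alph m n → ℝ) (r : ℝ) : ℤ :=
  ⌊Real.log (qLo p ^ 2 * etaLo a b p r) / (r * Real.log (aHi a))⌋

/-- `T_{1,r} := ⌊(A_1 + A_{5,r} + 3)/A_4⌋`. -/
def T1 (a : Alph m n → ℝ) (b : Fin m → ℝ) (p : Alph m n → ℝ) (r : ℝ) : ℤ :=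
  ⌊((A1 a b + A5 a b p r + 3 : ℤ) : ℝ) / A4 a b⌋

/-- `ρ = σ^♭`:  for `σ ∈ Ψ_1`, `σ^♭ = θ`; for `σ ∈ Ψ_l` with `l ≥ 2`, `σ^♭` is the unique
`ρ ∈ Ψ_{l-1}` with `ρ_L = (σ_L)^-` and `ρ_y` an initial segment of `σ_y`. -/
def IsFlat (a : Alph m n → ℝ) (b : Fin m → ℝ) (σ ρ : Wd m n) : Prop :=
  (σ.1.length = 1 ∧ ρ = (([], []) : Wd m n)) ∨
  (2 ≤ σ.1.length ∧ ρ ∈ Psi a b (σ.1.length - 1) ∧ ρ.1 = σ.1.dropLast ∧ sy ρ <+: sy σ)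

/-- `Λ_{n,r} := {σ ∈ Ψ^* : E_r(σ^♭) ≥ η̲_r^n > E_r(σ)}`. -/
def Lam (a : Alph m n → ℝ) (b : Fin m → ℝ) (p : Alph m n → ℝ) (r : ℝ) (N : ℕ) :
    Set (Wd m n) :=
  {σ | σ ∈ PsiStar a b ∧ ∃ ρ : Wd m n, IsFlat a b σ ρ ∧
    etaLo a b p r ^ N ≤ Er a p r ρ ∧ Er a p r σ < etaLo a b p r ^ N}

/-- `S_{n,r} := {σ ∈ Ψ^* : η̲_r^{n+1} ≤ E_r(σ) < η̲_r^n}`. -/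
def Snr (a : Alph m n → ℝ) (b : Fin m → ℝ) (p : Alph m n → ℝ) (r : ℝ) (N : ℕ) :
    Set (Wd m n) :=
  {σ | σ ∈ PsiStar a b ∧ etaLo a b p r ^ (N + 1) ≤ Er a p r σ ∧
    Er a p r σ < etaLo a b p r ^ N}

/-- `G_1(σ) := {ω ∈ S_{n,r} : σ_L ⪯ ω_L and σ_y ⪯ ω_y}`. -/
def G1 (a : Alph m n → ℝ) (b : Fin m → ℝ) (p : Alph m n → ℝ) (r : ℝ) (N : ℕ)
    (σ : Wd m n) : Set (Wd m n) :=
  {ω | ω ∈ Snr a b p r N ∧ σ.1 <+: ω.1 ∧ sy σ <+: sy ω}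

/-- `Λ_h(σ) := {ρ ∈ Φ_{l+h} : σ ⪯ ρ}` (componentwise order on pairs). -/
def LamH (a : Alph m n → ℝ) (b : Fin m → ℝ) (σ : Wd m n) (h : ℕ) : Set (Wd m n) :=
  {ρ | ρ ∈ Psi a b (σ.1.length + h) ∧ σ.1 <+: ρ.1 ∧ σ.2 <+: ρ.2}

/-- `I_{k,r}(t) := Σ_{ω∈Φ_k} E_r(ω)^t`. -/
def Ih (a : Alph m n → ℝ) (b : Fin m → ℝ) (p : Alph m n → ℝ) (r : ℝ) (k : ℕ) (t : ℝ) : ℝ :=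
  ∑' ω : Psi a b k, Er a p r ω.1 ^ t

/-- `Υ_n(t,s) := Σ_{σ∈Ψ_n} (p_{σ_L} q_{σ_R})^t a_{σ_L}^s`. -/
def Ups (a : Alph m n → ℝ) (b : Fin m → ℝ) (p : Alph m n → ℝ) (N : ℕ) (t s : ℝ) : ℝ :=
  ∑' σ : Psi a b N, (pP p σ.1.1 * qP p σ.1.2) ^ t * aP a σ.1.1 ^ s

/-- `τ_0 := ((1,j_0),(n_{j_0},j_0))`. -/
def tau0 (j0 : Fin m) (h : 2 ≤ n j0) : List (Alph m n) :=
  [⟨j0, ⟨0, by omega⟩⟩, ⟨j0, ⟨n j0 - 1, by omega⟩⟩]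

/-- `σ̄` is a bar-extension of `σ ∈ Ψ_l`: `σ̄ ∈ Ψ_{l+2}`, `σ̄_L = σ_L ∗ τ_0`, `σ_R ⪯ σ̄_R`. -/
def BarExt (a : Alph m n → ℝ) (b : Fin m → ℝ) (j0 : Fin m) (h : 2 ≤ n j0)
    (σ σb : Wd m n) : Prop :=
  σb ∈ Psi a b (σ.1.length + 2) ∧ σb.1 = σ.1 ++ tau0 j0 h ∧ σ.2 <+: σb.2

/-- cylinder set `[σ] ⊆ Φ_∞ = G^ℕ × G_y^ℕ`. -/
def Cyl (σ : Wd m n) : Set ((ℕ → Alph m n) × (ℕ → Fin m)) :=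
  {x | (∀ i : ℕ, ∀ hi : i < σ.1.length, x.1 i = σ.1.get ⟨i, hi⟩) ∧
       (∀ i : ℕ, ∀ hi : i < σ.2.length, x.2 i = σ.2.get ⟨i, hi⟩)}

/-- the affine map `f_{ij}(x,y) = (a_{ij} x + c_{ij}, b_j y + d_j)`. -/
def fmap (a : Alph m n → ℝ) (b : Fin m → ℝ) (c : Alph m n → ℝ) (d : Fin m → ℝ)
    (g : Alph m n) : ℝ × ℝ → ℝ × ℝ :=
  fun x => (a g * x.1 + c g, b g.1 * x.2 + d g.1)

/-- `A_{L,σ} = c_{i_1j_1} + Σ_{p≥2} (∏_{h<p} a_{i_hj_h}) c_{i_pj_p}`. -/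
def xL (a c : Alph m n → ℝ) : List (Alph m n) → ℝ
  | [] => 0
  | g :: w => c g + a g * xL a c w

/-- `B_{L,σ} = d_{j_1} + Σ_{p≥2} (∏_{h<p} b_{j_h}) d_{j_p}`. -/
def yL (b d : Fin m → ℝ) : List (Fin m) → ℝ
  | [] => 0
  | j :: τ => d j + b j * yL b d τ

/-- the approximate square `F_σ = [A_{L,σ}, A_{L,σ}+a_{σ_L}] × [B_{L,σ}, B_{L,σ}+b_{σ_y}]`. -/
def Fsq (a c : Alph m n → ℝ) (b d : Fin m → ℝ) (σ : Wd m n) : Set (ℝ × ℝ) :=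
  Set.Icc (xL a c σ.1) (xL a c σ.1 + aP a σ.1) ×ˢ
    Set.Icc (yL b d (sy σ)) (yL b d (sy σ) + bP b (sy σ))

/-- the Euclidean distance on `ℝ²`. -/
def eudist (x y : ℝ × ℝ) : ℝ := Real.sqrt ((x.1 - y.1) ^ 2 + (x.2 - y.2) ^ 2)

/-- the horizontal distance `d_h(S,T) = inf{|x-x'| : (x,y)∈S, (x',y')∈T}`. -/
def dH (S T : Set (ℝ × ℝ)) : ℝ := sInf {e | ∃ x ∈ S, ∃ y ∈ T, e = |x.1 - y.1|}

/-- the (Euclidean) diameter of a subset of `ℝ²`. -/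
def euDiam (S : Set (ℝ × ℝ)) : ℝ := sSup {e | ∃ x ∈ S, ∃ y ∈ S, e = eudist x y}

/-- the `N`-th quantization error of order `r`. -/
def qerr (μ : Measure (ℝ × ℝ)) (r : ℝ) (N : ℕ) : ℝ :=
  sInf {e : ℝ | ∃ α : Finset (ℝ × ℝ), ∃ hα : α.Nonempty, α.card ≤ N ∧
    e = (∫ x, α.inf' hα (fun y => eudist x y ^ r) ∂μ) ^ (1 / r)}

/-- the topological support of a measure on `ℝ²`. -/
def suppSet (μ : Measure (ℝ × ℝ)) : Set (ℝ × ℝ) :=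
  {x | ∀ U : Set (ℝ × ℝ), IsOpen U → x ∈ U → μ U ≠ 0}

/-- the dyadic square `[k 2^{-N}, (k+1) 2^{-N}) × [k' 2^{-N}, (k'+1) 2^{-N})`. -/
def Dy (N : ℕ) (k : ℤ × ℤ) : Set (ℝ × ℝ) :=
  Set.Ico ((k.1 : ℝ) * (2 : ℝ) ^ (-(N : ℤ))) (((k.1 : ℝ) + 1) * (2 : ℝ) ^ (-(N : ℤ))) ×ˢ
    Set.Ico ((k.2 : ℝ) * (2 : ℝ) ^ (-(N : ℤ))) (((k.2 : ℝ) + 1) * (2 : ℝ) ^ (-(N : ℤ)))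


-- ===== auxiliary development =====
section Aux

variable {m : ℕ} {n : Fin m → ℕ}

/-- lists over `Fin m` of length at most `k` -/
def allL (m : ℕ) : ℕ → Finset (List (Fin m))
  | 0 => {[]}
  | k+1 => insert [] (Finset.univ.biUnion fun j => (allL m k).image (j :: ·))

lemma mem_allL (k : ℕ) (τ : List (Fin m)) : τ ∈ allL m k ↔ τ.length ≤ k := by
  induction k generalizing τ with
  | zero => simp [allL, List.length_eq_zero_iff]
  | succ k ih =>
    cases τ with
    | nil => simp [allL]
    | cons j τ' =>
      simp only [allL, Finset.mem_insert, Finset.mem_biUnion, Finset.mem_univ, true_and,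
        Finset.mem_image, List.length_cons]
      constructor
      · rintro (h | ⟨j', τ'', hτ'', h⟩)
        · simp at h
        · cases h; exact Nat.succ_le_succ ((ih _).1 hτ'')
      · intro h
        exact Or.inr ⟨j, τ', (ih _).2 (Nat.succ_le_succ_iff.mp h), rfl⟩

/-- lists over the alphabet of length exactly `N` -/
def listsG (m : ℕ) (n : Fin m → ℕ) : ℕ → Finset (List (Alph m n))
  | 0 => {[]}
  | N+1 => Finset.univ.biUnion fun g => (listsG m n N).image (g :: ·)

lemma mem_listsG (N : ℕ) (ω : List (Alph m n)) : ω ∈ listsG m n N ↔ ω.length = N := by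
  induction N generalizing ω with
  | zero => simp [listsG, List.length_eq_zero_iff]
  | succ N ih =>
    cases ω with
    | nil => simp [listsG]
    | cons g ω' =>
      simp only [listsG, Finset.mem_biUnion, Finset.mem_univ, true_and, Finset.mem_image,
        List.length_cons]
      constructor
      · rintro ⟨g', ω'', hω'', h⟩; cases h; exact congrArg Nat.succ ((ih _).1 hω'')
      · intro h; exact ⟨g, ω', (ih _).2 (Nat.succ_injective h), rfl⟩

lemma cons_image_disj {α : Type*} [DecidableEq α] (s t : Finset (List α)) {g g' : α} (h : g ≠ g') :
    Disjoint (s.image (g :: ·)) (t.image (g' :: ·)) := by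
  rw [Finset.disjoint_left]
  rintro l hl hl'
  simp only [Finset.mem_image] at hl hl'
  obtain ⟨x, -, hx⟩ := hl
  obtain ⟨y, -, hy⟩ := hl'
  rw [← hy] at hx
  exact h (by injection hx)

lemma sum_listsG (φ : Alph m n → ℝ) (N : ℕ) :
    ∑ ω ∈ listsG m n N, (ω.map φ).prod = (∑ g, φ g) ^ N := by
  induction N with
  | zero => simp [listsG]
  | succ N ih =>
    rw [listsG, Finset.sum_biUnion (fun g _ g' _ hgg' =>
      Finset.disjoint_coe.mp (by exact_mod_cast cons_image_disj _ _ hgg'))]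
    have : ∀ g : Alph m n, ∑ ω ∈ (listsG m n N).image (g :: ·), (ω.map φ).prod
        = φ g * (∑ g, φ g) ^ N := by
      intro g
      rw [Finset.sum_image (fun x _ y _ h => by injection h)]
      simp only [List.map_cons, List.prod_cons]
      rw [← Finset.mul_sum, ih]
    simp only [this, ← Finset.sum_mul, pow_succ]
    ring

end Aux
section Aux2

variable {m : ℕ} {n : Fin m → ℕ}

lemma listProd_pos {α : Type*} {f : α → ℝ} (hf : ∀ x, 0 < f x) (l : List α) :
    0 < (l.map f).prod := by
  apply List.prod_pos; intro x hx
  obtain ⟨y, -, rfl⟩ := List.mem_map.mp hx; exact hf y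

lemma listProd_le_one {α : Type*} {f : α → ℝ} (hf0 : ∀ x, 0 < f x) (hf1 : ∀ x, f x ≤ 1)
    (l : List α) : (l.map f).prod ≤ 1 := by
  induction l with
  | nil => simp
  | cons x l ih =>
    simp only [List.map_cons, List.prod_cons]
    calc f x * (l.map f).prod ≤ 1 * 1 :=
      mul_le_mul (hf1 x) ih (listProd_pos hf0 l).le zero_le_one
    _ = 1 := one_mul 1

lemma listProd_rpow {α : Type*} {f : α → ℝ} (hf : ∀ x, 0 < f x) (e : ℝ) (l : List α) :
    (l.map f).prod ^ e = (l.map fun x => f x ^ e).prod := by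
  induction l with
  | nil => simp
  | cons x l ih =>
    simp only [List.map_cons, List.prod_cons]
    rw [Real.mul_rpow (hf x).le (listProd_pos hf l).le, ih]

lemma listProd_mul {α : Type*} (f g : α → ℝ) (l : List α) :
    (l.map fun x => f x * g x).prod = (l.map f).prod * (l.map g).prod := by
  induction l with
  | nil => simp
  | cons x l ih => simp only [List.map_cons, List.prod_cons, ih]; ring

lemma bP_pos {b : Fin m → ℝ} (hb : ∀ j, 0 < b j) (τ : List (Fin m)) : 0 < bP b τ :=
  listProd_pos hb τ

lemma bP_le_one {b : Fin m → ℝ} (hb0 : ∀ j, 0 < b j) (hb1 : ∀ j, b j ≤ 1)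
    (τ : List (Fin m)) : bP b τ ≤ 1 := listProd_le_one hb0 hb1 τ

lemma bP_cons (b : Fin m → ℝ) (j : Fin m) (τ : List (Fin m)) :
    bP b (j :: τ) = b j * bP b τ := by simp [bP]

lemma bP_append (b : Fin m → ℝ) (τ τ' : List (Fin m)) :
    bP b (τ ++ τ') = bP b τ * bP b τ' := by simp [bP]

/-- the section predicate -/
def Sec (b : Fin m → ℝ) (x : ℝ) (τ : List (Fin m)) : Prop :=
  1 ≤ τ.length ∧ x ≤ bP b τ.dropLast ∧ bP b τ < x

open Classical in
/-- the section, as a finset -/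
noncomputable def secF (b : Fin m → ℝ) (x : ℝ) (k : ℕ) : Finset (List (Fin m)) :=
  (allL m k).filter (Sec b x)

lemma not_sec_of_one_lt {b : Fin m → ℝ} (hb0 : ∀ j, 0 < b j) (hb1 : ∀ j, b j ≤ 1)
    {x : ℝ} (hx : 1 < x) (τ : List (Fin m)) : ¬ Sec b x τ := by
  rintro ⟨-, h2, -⟩
  exact absurd (h2.trans (bP_le_one hb0 hb1 _)) (not_le.mpr hx)

lemma sec_cons {b : Fin m → ℝ} (hb0 : ∀ j, 0 < b j) {x : ℝ} (hx1 : x ≤ 1)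
    (j : Fin m) (τ : List (Fin m)) :
    Sec b x (j :: τ) ↔ (τ = [] ∧ b j < x) ∨ Sec b (x / b j) τ := by
  cases τ with
  | nil =>
    simp only [Sec, List.dropLast_singleton, List.length_cons]
    constructor
    · rintro ⟨-, -, h3⟩
      exact Or.inl ⟨by simp, by simpa [bP] using h3⟩
    · rintro (⟨-, h⟩ | ⟨h, -⟩)
      · exact ⟨le_refl 1, by simpa [bP], by simpa [bP]⟩
      · simp at h
  | cons j' τ' =>
    have hdl : (j :: j' :: τ').dropLast = j :: (j' :: τ').dropLast := rfl
    constructor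
    · rintro ⟨-, h2, h3⟩
      rw [hdl, bP_cons] at h2
      rw [bP_cons] at h3
      refine Or.inr ⟨by simp, ?_, ?_⟩
      · rw [div_le_iff₀ (hb0 j)]; linarith [h2]
      · rw [lt_div_iff₀ (hb0 j)]; linarith [h3]
    · rintro (⟨h, -⟩ | ⟨-, h2, h3⟩)
      · simp at h
      · refine ⟨by simp, ?_, ?_⟩
        · rw [hdl, bP_cons]
          rw [div_le_iff₀ (hb0 j)] at h2; linarith
        · rw [bP_cons]
          rw [lt_div_iff₀ (hb0 j)] at h3; linarith

lemma secF_sum {b : Fin m → ℝ} (hb0 : ∀ j, 0 < b j) (hb1 : ∀ j, b j ≤ 1)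
    {B : ℝ} (hB0 : 0 < B) (hB : ∀ j, b j ≤ B)
    (w : Fin m → ℝ) (hw : ∀ j, 0 ≤ w j) (hw1 : ∑ j, w j = 1) :
    ∀ k : ℕ, ∀ x : ℝ, 0 < x → x ≤ 1 → B ^ k < x →
      ∑ τ ∈ secF b x k, (τ.map w).prod = 1 := by
  intro k
  induction k with
  | zero => intro x hx hx1 hk; simp only [pow_zero] at hk; linarith
  | succ k ih =>
    intro x hx hx1 hk
    classical
    have hBx : B ^ k < x / B := by
      rw [lt_div_iff₀ hB0]; calc B ^ k * B = B ^ (k+1) := (pow_succ B k).symm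
      _ < x := hk
    have hdisj : ∀ g ∈ (Finset.univ : Finset (Fin m)), ∀ g' ∈ Finset.univ, g ≠ g' →
        Disjoint (((allL m k).image (g :: ·)).filter (Sec b x))
          (((allL m k).image (g' :: ·)).filter (Sec b x)) := by
      intro g _ g' _ hgg'
      exact Finset.disjoint_filter_filter (cons_image_disj _ _ hgg')
    rw [secF, allL, Finset.filter_insert, if_neg (by rintro ⟨h, -⟩; simp at h),
      Finset.filter_biUnion, Finset.sum_biUnion hdisj]
    have key : ∀ j : Fin m,
        ∑ τ ∈ ((allL m k).image (j :: ·)).filter (Sec b x), (τ.map w).prod = w j := by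
      intro j
      rw [Finset.sum_filter, Finset.sum_image (fun x _ y _ h => by injection h)]
      simp only [List.map_cons, List.prod_cons]
      rcases lt_or_ge (b j) x with hbx | hbx
      · -- only τ' = [] contributes
        have hsec : ∀ τ' : List (Fin m), Sec b x (j :: τ') ↔ τ' = [] := by
          intro τ'
          rw [sec_cons hb0 hx1]
          constructor
          · rintro (⟨h, -⟩ | h)
            · exact h
            · exact absurd h (not_sec_of_one_lt hb0 hb1
                ((one_lt_div (hb0 j)).mpr hbx) τ')
          · rintro rfl; exact Or.inl ⟨rfl, hbx⟩
        simp only [hsec]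
        rw [Finset.sum_ite_eq' (allL m k) ([] : List (Fin m))
          (fun τ' => w j * ((τ'.map w).prod))]
        simp [mem_allL]
      · -- τ' ranges over the section at x / b j
        have hsec : ∀ τ' : List (Fin m), Sec b x (j :: τ') ↔ Sec b (x / b j) τ' := by
          intro τ'
          rw [sec_cons hb0 hx1]
          constructor
          · rintro (⟨-, h⟩ | h)
            · exact absurd h (not_lt.mpr hbx)
            · exact h
          · exact Or.inr
        simp only [hsec]
        rw [← Finset.sum_filter, ← Finset.mul_sum]
        have := ih (x / b j) (div_pos hx (hb0 j)) ((div_le_one (hb0 j)).mpr hbx)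
          (lt_of_lt_of_le hBx (div_le_div_of_nonneg_left hx.le (hb0 j) (hB j)))
        rw [secF] at this
        rw [this, mul_one]
    simp only [key]
    exact hw1

end Aux2
section Aux3

variable {m : ℕ} {n : Fin m → ℕ}

lemma listProd_le {α : Type*} {f g : α → ℝ} (h0 : ∀ x, 0 < f x) (h : ∀ x, f x ≤ g x)
    (l : List α) : (l.map f).prod ≤ (l.map g).prod := by
  induction l with
  | nil => simp
  | cons x l ih =>
    simp only [List.map_cons, List.prod_cons]
    have hg0 : (0:ℝ) < g x := lt_of_lt_of_le (h0 x) (h x)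
    exact mul_le_mul (h x) ih (listProd_pos h0 l).le hg0.le

lemma pow_len_le_listProd {α : Type*} {f : α → ℝ} {c : ℝ} (hc : 0 ≤ c)
    (h : ∀ x, c ≤ f x) (l : List α) : c ^ l.length ≤ (l.map f).prod := by
  induction l with
  | nil => simp
  | cons x l ih =>
    simp only [List.map_cons, List.prod_cons, List.length_cons, pow_succ']
    exact mul_le_mul (h x) ih (pow_nonneg hc _) (hc.trans (h x))

lemma listProd_le_pow {α : Type*} {f : α → ℝ} {c : ℝ} (h0 : ∀ x, 0 < f x)
    (h : ∀ x, f x ≤ c) (l : List α) : (l.map f).prod ≤ c ^ l.length := by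
  induction l with
  | nil => simp
  | cons x l ih =>
    simp only [List.map_cons, List.prod_cons, List.length_cons, pow_succ']
    exact mul_le_mul (h x) ih (listProd_pos h0 l).le ((h0 x).le.trans (h x))

lemma listProd_nonneg {α : Type*} {f : α → ℝ} (hf : ∀ x, 0 ≤ f x) (l : List α) :
    0 ≤ (l.map f).prod := by
  induction l with
  | nil => simp
  | cons x l ih => simp only [List.map_cons, List.prod_cons]; exact mul_nonneg (hf x) ih

lemma rpow_between {u v y : ℝ} (hu : 0 < u) (huy : u ≤ y) (hyv : y ≤ v) (e : ℝ) :
    min (u ^ e) (v ^ e) ≤ y ^ e ∧ y ^ e ≤ max (u ^ e) (v ^ e) := by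
  have hy : 0 < y := lt_of_lt_of_le hu huy
  rcases le_or_gt 0 e with he | he
  · exact ⟨le_trans (min_le_left _ _) (Real.rpow_le_rpow hu.le huy he),
      le_trans (Real.rpow_le_rpow hy.le hyv he) (le_max_right _ _)⟩
  · exact ⟨le_trans (min_le_right _ _) (Real.rpow_le_rpow_of_nonpos hy hyv he.le),
      le_trans (Real.rpow_le_rpow_of_nonpos hu huy he.le) (le_max_left _ _)⟩

lemma mem_Psi_iff {a : Alph m n → ℝ} {b : Fin m → ℝ} (hb0 : ∀ j, 0 < b j)
    (N : ℕ) (ω : List (Alph m n)) (τ : List (Fin m)) :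
    ((ω, τ) : Wd m n) ∈ Psi a b N ↔
      ω.length = N ∧ Sec b (aP a ω / bP b (ω.map Sigma.fst)) τ := by
  have hbω : 0 < bP b (ω.map Sigma.fst) := bP_pos hb0 _
  cases τ with
  | nil => simp [Psi, Sec]
  | cons j τ' =>
    have hsy : sy ((ω, j :: τ') : Wd m n) = ω.map Sigma.fst ++ (j :: τ') := rfl
    have hdl : (ω.map Sigma.fst ++ (j :: τ')).dropLast
        = ω.map Sigma.fst ++ (j :: τ').dropLast :=
      List.dropLast_append_of_ne_nil (List.cons_ne_nil j τ')
    constructor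
    · rintro ⟨h1, h2, h3, h4⟩
      refine ⟨h1, by simp, ?_, ?_⟩
      · rw [hsy, hdl, bP_append] at h3
        rw [div_le_iff₀ hbω]; linarith
      · rw [hsy, bP_append] at h4
        rw [lt_div_iff₀ hbω]; linarith
    · rintro ⟨h1, -, h3, h4⟩
      refine ⟨h1, by simp, ?_, ?_⟩
      · rw [hsy, hdl, bP_append]
        rw [div_le_iff₀ hbω] at h3; linarith
      · rw [hsy, bP_append]
        rw [lt_div_iff₀ hbω] at h4; linarith

open Classical in
lemma Ups_eq_sum {a : Alph m n → ℝ} {b : Fin m → ℝ} (p : Alph m n → ℝ)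
    (hb0 : ∀ j, 0 < b j) (N K : ℕ)
    (hK : ∀ ω ∈ listsG m n N, ∀ τ : List (Fin m),
      Sec b (aP a ω / bP b (ω.map Sigma.fst)) τ → τ.length ≤ K) (t s : ℝ) :
    Ups a b p N t s = ∑ ω ∈ listsG m n N, ∑ τ ∈ allL m K,
      (if Sec b (aP a ω / bP b (ω.map Sigma.fst)) τ then
        (pP p ω * qP p τ) ^ t * aP a ω ^ s else 0) := by
  classical
  have hF : Ups a b p N t s
      = ∑' σ : Wd m n, (Psi a b N).indicator
          (fun σ => (pP p σ.1 * qP p σ.2) ^ t * aP a σ.1 ^ s) σ := by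
    rw [Ups]
    exact tsum_subtype (Psi a b N) (fun σ : Wd m n => (pP p σ.1 * qP p σ.2) ^ t * aP a σ.1 ^ s)
  rw [hF, tsum_eq_sum (s := (listsG m n N ×ˢ allL m K).filter (fun σ => σ ∈ Psi a b N))
    (by
      intro σ hσ
      apply Set.indicator_of_notMem
      intro hmem
      apply hσ
      obtain ⟨ω, τ⟩ := σ
      obtain ⟨h1, h2⟩ := (mem_Psi_iff hb0 N ω τ).mp hmem
      have hω : ω ∈ listsG m n N := (mem_listsG N ω).mpr h1
      refine Finset.mem_filter.mpr ⟨Finset.mem_product.mpr ⟨hω, ?_⟩, hmem⟩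
      exact (mem_allL K τ).mpr (hK ω hω τ h2))]
  rw [Finset.sum_filter, Finset.sum_product]
  refine Finset.sum_congr rfl fun ω hω => Finset.sum_congr rfl fun τ hτ => ?_
  have hiff : ((ω, τ) : Wd m n) ∈ Psi a b N
      ↔ Sec b (aP a ω / bP b (ω.map Sigma.fst)) τ := by
    rw [mem_Psi_iff hb0]
    simp [(mem_listsG N ω).mp hω]
  by_cases h : Sec b (aP a ω / bP b (ω.map Sigma.fst)) τ
  · rw [if_pos (hiff.mpr h), if_pos h, Set.indicator_of_mem (hiff.mpr h)]
  · rw [if_neg (fun hc => h (hiff.mp hc)), if_neg h]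

lemma inner_bounds {b : Fin m → ℝ} (hb0 : ∀ j, 0 < b j) (hb1 : ∀ j, b j ≤ 1)
    {B : ℝ} (hB0 : 0 < B) (hB : ∀ j, b j ≤ B)
    {L : ℝ} (hL0 : 0 < L) (hL : ∀ j, L ≤ b j)
    (u : Fin m → ℝ) (hu : ∀ j, 0 ≤ u j) (θ : ℝ)
    (hw1 : ∑ j, u j * b j ^ θ = 1)
    (K : ℕ) {x : ℝ} (hx0 : 0 < x) (hx1 : x ≤ 1) (hKx : B ^ K < x) :
    min (L ^ (-θ)) 1 * x ^ (-θ) ≤ ∑ τ ∈ secF b x K, (τ.map u).prod ∧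
    ∑ τ ∈ secF b x K, (τ.map u).prod ≤ max (L ^ (-θ)) 1 * x ^ (-θ) := by
  classical
  set w : Fin m → ℝ := fun j => u j * b j ^ θ with hw
  have hw0 : ∀ j, 0 ≤ w j := fun j =>
    mul_nonneg (hu j) (Real.rpow_pos_of_pos (hb0 j) θ).le
  have hwsum : ∑ τ ∈ secF b x K, (τ.map w).prod = 1 :=
    secF_sum hb0 hb1 hB0 hB w hw0 hw1 K x hx0 hx1 hKx
  have hterm : ∀ τ ∈ secF b x K,
      (τ.map u).prod = (τ.map w).prod * bP b τ ^ (-θ) := by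
    intro τ _
    have h1 : (τ.map w).prod = (τ.map u).prod * bP b τ ^ θ := by
      rw [hw, listProd_mul u (fun j => b j ^ θ), bP, listProd_rpow hb0 θ]
    rw [h1, mul_assoc, ← Real.rpow_add (bP_pos hb0 τ), add_neg_cancel, Real.rpow_zero,
      mul_one]
  have hbound : ∀ τ ∈ secF b x K,
      min (L ^ (-θ)) 1 * x ^ (-θ) ≤ bP b τ ^ (-θ) ∧
      bP b τ ^ (-θ) ≤ max (L ^ (-θ)) 1 * x ^ (-θ) := by
    intro τ hτ
    have hsec : Sec b x τ := (Finset.mem_filter.mp hτ).2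
    have hτub : bP b τ ≤ x := hsec.2.2.le
    have hτlb : L * x ≤ bP b τ := by
      rcases τ.eq_nil_or_concat with rfl | ⟨τ₀, j, rfl⟩
      · exact absurd hsec.1 (by simp)
      · have hdl : (τ₀.concat j).dropLast = τ₀ := by
          rw [List.concat_eq_append, List.dropLast_concat]
        have h1 : x ≤ bP b τ₀ := by
          have := hsec.2.1; rwa [hdl] at this
        have h2 : bP b (τ₀.concat j) = bP b τ₀ * b j := by
          rw [List.concat_eq_append, bP_append]; simp [bP]
        rw [h2]
        calc L * x ≤ b j * bP b τ₀ :=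
          mul_le_mul (hL j) h1 hx0.le (hb0 j).le
        _ = bP b τ₀ * b j := mul_comm _ _
      
    have hLx0 : 0 < L * x := mul_pos hL0 hx0
    obtain ⟨hlo, hhi⟩ := rpow_between hLx0 hτlb hτub (-θ)
    have hmm : (L * x) ^ (-θ) = L ^ (-θ) * x ^ (-θ) := Real.mul_rpow hL0.le hx0.le
    have e1 : min (L ^ (-θ)) 1 * x ^ (-θ) = min ((L * x) ^ (-θ)) (x ^ (-θ)) := by
      rw [min_mul_of_nonneg _ _ (Real.rpow_pos_of_pos hx0 (-θ)).le, hmm, one_mul]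
    have e2 : max (L ^ (-θ)) 1 * x ^ (-θ) = max ((L * x) ^ (-θ)) (x ^ (-θ)) := by
      rw [max_mul_of_nonneg _ _ (Real.rpow_pos_of_pos hx0 (-θ)).le, hmm, one_mul]
    exact ⟨e1 ▸ hlo, e2 ▸ hhi⟩
  constructor
  · calc min (L ^ (-θ)) 1 * x ^ (-θ)
        = ∑ τ ∈ secF b x K, (τ.map w).prod * (min (L ^ (-θ)) 1 * x ^ (-θ)) := by
          rw [← Finset.sum_mul, hwsum, one_mul]
    _ ≤ ∑ τ ∈ secF b x K, (τ.map u).prod := by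
        apply Finset.sum_le_sum
        intro τ hτ
        rw [hterm τ hτ]
        exact mul_le_mul_of_nonneg_left (hbound τ hτ).1 (listProd_nonneg hw0 τ)
  · calc ∑ τ ∈ secF b x K, (τ.map u).prod
        ≤ ∑ τ ∈ secF b x K, (τ.map w).prod * (max (L ^ (-θ)) 1 * x ^ (-θ)) := by
          apply Finset.sum_le_sum
          intro τ hτ
          rw [hterm τ hτ]
          exact mul_le_mul_of_nonneg_left (hbound τ hτ).2 (listProd_nonneg hw0 τ)
    _ = max (L ^ (-θ)) 1 * x ^ (-θ) := by rw [← Finset.sum_mul, hwsum, one_mul]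

end Aux3
section Aux4

variable {m : ℕ} {n : Fin m → ℕ}

lemma Ups_bounds {a : Alph m n → ℝ} {b : Fin m → ℝ} {p : Alph m n → ℝ}
    (hm : 0 < m) (hn : ∀ j, 1 ≤ n j)
    (hab : ∀ g : Alph m n, 0 < a g ∧ a g < b g.1 ∧ b g.1 < 1)
    (hp : ∀ g, 0 < p g) (t s θ : ℝ)
    (hθ : ∑ j, qf p j ^ t * b j ^ θ = 1) :
    ∃ C1 C2 : ℝ, 0 < C1 ∧ 0 < C2 ∧ ∀ N : ℕ,
      C1 * (∑ g, p g ^ t * (a g ^ (s - θ) * b g.1 ^ θ)) ^ N ≤ Ups a b p N t s ∧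
      Ups a b p N t s ≤ C2 * (∑ g, p g ^ t * (a g ^ (s - θ) * b g.1 ^ θ)) ^ N := by
  classical
  have hb0 : ∀ j, 0 < b j := fun j => lt_trans (hab ⟨j, ⟨0, hn j⟩⟩).1 (hab ⟨j, ⟨0, hn j⟩⟩).2.1
  have hb1 : ∀ j, b j < 1 := fun j => (hab ⟨j, ⟨0, hn j⟩⟩).2.2
  have ha0 : ∀ g, 0 < a g := fun g => (hab g).1
  haveI hne : Nonempty (Fin m) := ⟨⟨0, hm⟩⟩
  obtain ⟨j1, hj1⟩ := Finite.exists_max b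
  obtain ⟨j2, hj2⟩ := Finite.exists_min b
  haveI hga : Nonempty (Alph m n) := ⟨⟨⟨0, hm⟩, ⟨0, hn _⟩⟩⟩
  obtain ⟨g2, hg2⟩ := Finite.exists_min a
  have hB0 : 0 < b j1 := hb0 j1
  have hB1 : b j1 < 1 := hb1 j1
  have hL0 : 0 < b j2 := hb0 j2
  have haL0 : 0 < a g2 := ha0 g2
  obtain ⟨M, hM⟩ := ((tendsto_pow_atTop_nhds_zero_of_lt_one hB0.le
    hB1).eventually_lt_const haL0).exists
  have hq0 : ∀ j, 0 < qf p j := fun j =>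
    Finset.sum_pos (fun i _ => hp ⟨j, i⟩) ⟨⟨0, hn j⟩, Finset.mem_univ _⟩
  refine ⟨min (b j2 ^ (-θ)) 1, max (b j2 ^ (-θ)) 1,
    lt_min (Real.rpow_pos_of_pos hL0 _) one_pos,
    lt_of_lt_of_le one_pos (le_max_right _ _), fun N => ?_⟩
  set K := N * M + 1 with hKdef
  -- facts about x_ω
  have hx : ∀ ω ∈ listsG m n N,
      0 < aP a ω / bP b (ω.map Sigma.fst) ∧ aP a ω / bP b (ω.map Sigma.fst) ≤ 1 ∧
      b j1 ^ K < aP a ω / bP b (ω.map Sigma.fst) := by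
    intro ω hω
    have hlen := (mem_listsG N ω).mp hω
    have haP : 0 < aP a ω := listProd_pos ha0 ω
    have hbP : 0 < bP b (ω.map Sigma.fst) := bP_pos hb0 _
    have hble : bP b (ω.map Sigma.fst) ≤ 1 := bP_le_one hb0 (fun j => (hb1 j).le) _
    refine ⟨div_pos haP hbP, ?_, ?_⟩
    · rw [div_le_one hbP]
      have hbω : bP b (ω.map Sigma.fst) = (ω.map fun g => b g.1).prod := by
        rw [bP, List.map_map]; rfl
      rw [hbω]
      exact listProd_le ha0 (fun g => (hab g).2.1.le) ω
    · have h1 : aP a ω ≤ aP a ω / bP b (ω.map Sigma.fst) := by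
        rw [le_div_iff₀ hbP]
        exact mul_le_of_le_one_right haP.le hble
      have h2 : a g2 ^ N ≤ aP a ω := hlen ▸ pow_len_le_listProd haL0.le hg2 ω
      have h3 : b j1 ^ K < a g2 ^ N := by
        calc b j1 ^ K = b j1 ^ (N * M) * b j1 := pow_succ _ _
        _ < b j1 ^ (N * M) * 1 := mul_lt_mul_of_pos_left hB1 (pow_pos hB0 _)
        _ = (b j1 ^ M) ^ N := by rw [mul_one, ← pow_mul, mul_comm]
        _ ≤ a g2 ^ N := pow_le_pow_left₀ (pow_pos hB0 M).le hM.le N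
      linarith
  -- section lengths are bounded by K
  have hKlen : ∀ ω ∈ listsG m n N, ∀ τ : List (Fin m),
      Sec b (aP a ω / bP b (ω.map Sigma.fst)) τ → τ.length ≤ K := by
    intro ω hω τ hsec
    by_contra hcon
    push_neg at hcon
    have hd : bP b τ.dropLast ≤ b j1 ^ τ.dropLast.length := listProd_le_pow hb0 hj1 _
    have hlen : K ≤ τ.dropLast.length := by
      rw [List.length_dropLast]; omega
    have hdd : b j1 ^ τ.dropLast.length ≤ b j1 ^ K :=
      pow_le_pow_of_le_one hB0.le hB1.le hlen
    have hue := hsec.2.1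
    have := (hx ω hω).2.2
    linarith
  -- rewrite the inner sums
  have hinner : ∀ ω ∈ listsG m n N,
      (∑ τ ∈ allL m K, if Sec b (aP a ω / bP b (ω.map Sigma.fst)) τ then
        (pP p ω * qP p τ) ^ t * aP a ω ^ s else 0)
      = (pP p ω ^ t * aP a ω ^ s) *
          ∑ τ ∈ secF b (aP a ω / bP b (ω.map Sigma.fst)) K,
            (τ.map fun j => qf p j ^ t).prod := by
    intro ω hω
    rw [Finset.mul_sum, secF, Finset.sum_filter]
    apply Finset.sum_congr rfl
    intro τ hτ
    by_cases h : Sec b (aP a ω / bP b (ω.map Sigma.fst)) τ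
    · rw [if_pos h, if_pos h]
      have hqτ : qP p τ ^ t = (τ.map fun j => qf p j ^ t).prod := listProd_rpow hq0 t τ
      have hpω : (0:ℝ) ≤ pP p ω := listProd_nonneg (fun g => (hp g).le) ω
      have hqτ0 : (0:ℝ) ≤ qP p τ := listProd_nonneg (fun j => (hq0 j).le) τ
      rw [Real.mul_rpow hpω hqτ0, ← hqτ]
      show pP p ω ^ t * qP p τ ^ t * aP a ω ^ s = pP p ω ^ t * aP a ω ^ s * qP p τ ^ t
      ring
    · rw [if_neg h, if_neg h]
  have hUps : Ups a b p N t s = ∑ ω ∈ listsG m n N,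
      (pP p ω ^ t * aP a ω ^ s) *
        ∑ τ ∈ secF b (aP a ω / bP b (ω.map Sigma.fst)) K,
          (τ.map fun j => qf p j ^ t).prod := by
    rw [Ups_eq_sum p hb0 N K hKlen t s]
    exact Finset.sum_congr rfl hinner
  -- express the φ-product
  have hφ : ∀ ω ∈ listsG m n N,
      pP p ω ^ t * aP a ω ^ s * (aP a ω / bP b (ω.map Sigma.fst)) ^ (-θ)
        = (ω.map fun g => p g ^ t * (a g ^ (s - θ) * b g.1 ^ θ)).prod := by
    intro ω hω
    have haP : 0 < aP a ω := listProd_pos ha0 ω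
    have hbP : 0 < bP b (ω.map Sigma.fst) := bP_pos hb0 _
    have e1 : (aP a ω / bP b (ω.map Sigma.fst)) ^ (-θ)
        = aP a ω ^ (-θ) * bP b (ω.map Sigma.fst) ^ θ := by
      rw [Real.div_rpow haP.le hbP.le, Real.rpow_neg hbP.le θ, div_eq_mul_inv, inv_inv]
    have e2 : aP a ω ^ s * aP a ω ^ (-θ) = aP a ω ^ (s - θ) := by
      rw [← Real.rpow_add haP, ← sub_eq_add_neg]
    have e3 : pP p ω ^ t = (ω.map fun g => p g ^ t).prod := listProd_rpow hp t ω
    have e4 : aP a ω ^ (s - θ) = (ω.map fun g => a g ^ (s - θ)).prod :=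
      listProd_rpow ha0 _ ω
    have e5 : bP b (ω.map Sigma.fst) ^ θ = (ω.map fun g => b g.1 ^ θ).prod := by
      rw [bP, List.map_map]
      exact listProd_rpow (f := fun g : Alph m n => b g.1) (fun g => hb0 g.1) θ ω
    calc pP p ω ^ t * aP a ω ^ s * (aP a ω / bP b (ω.map Sigma.fst)) ^ (-θ)
        = pP p ω ^ t * (aP a ω ^ s * aP a ω ^ (-θ)) * bP b (ω.map Sigma.fst) ^ θ := by
          rw [e1]; ring
    _ = (ω.map fun g => p g ^ t).prod * ((ω.map fun g => a g ^ (s - θ)).prod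
          * (ω.map fun g => b g.1 ^ θ).prod) := by
          rw [e2, e3, e4, e5]; ring
    _ = (ω.map fun g => p g ^ t * (a g ^ (s - θ) * b g.1 ^ θ)).prod := by
          rw [listProd_mul (fun g : Alph m n => p g ^ t)
            (fun g : Alph m n => a g ^ (s - θ) * b g.1 ^ θ),
            listProd_mul (fun g : Alph m n => a g ^ (s - θ))
            (fun g : Alph m n => b g.1 ^ θ)]
  have hfac : ∀ ω : List (Alph m n), 0 ≤ pP p ω ^ t * aP a ω ^ s := fun ω =>
    mul_nonneg (Real.rpow_nonneg (listProd_nonneg (fun g => (hp g).le) ω) t)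
      (Real.rpow_nonneg (listProd_nonneg (fun g => (ha0 g).le) ω) s)
  have hu : ∀ j, 0 ≤ qf p j ^ t := fun j => (Real.rpow_pos_of_pos (hq0 j) t).le
  constructor
  · rw [hUps, ← sum_listsG (fun g => p g ^ t * (a g ^ (s - θ) * b g.1 ^ θ)) N,
      Finset.mul_sum]
    apply Finset.sum_le_sum
    intro ω hω
    obtain ⟨hx0, hx1, hxK⟩ := hx ω hω
    have hib := (inner_bounds hb0 (fun j => (hb1 j).le) hB0 hj1 hL0 hj2
      (fun j => qf p j ^ t) hu θ hθ K hx0 hx1 hxK).1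
    calc min (b j2 ^ (-θ)) 1 * (ω.map fun g => p g ^ t * (a g ^ (s - θ) * b g.1 ^ θ)).prod
        = (pP p ω ^ t * aP a ω ^ s) *
            (min (b j2 ^ (-θ)) 1 * (aP a ω / bP b (ω.map Sigma.fst)) ^ (-θ)) := by
          rw [← hφ ω hω]; ring
    _ ≤ _ := mul_le_mul_of_nonneg_left hib (hfac ω)
  · rw [hUps, ← sum_listsG (fun g => p g ^ t * (a g ^ (s - θ) * b g.1 ^ θ)) N,
      Finset.mul_sum]
    apply Finset.sum_le_sum
    intro ω hω
    obtain ⟨hx0, hx1, hxK⟩ := hx ω hω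
    have hib := (inner_bounds hb0 (fun j => (hb1 j).le) hB0 hj1 hL0 hj2
      (fun j => qf p j ^ t) hu θ hθ K hx0 hx1 hxK).2
    calc (pP p ω ^ t * aP a ω ^ s) *
          ∑ τ ∈ secF b (aP a ω / bP b (ω.map Sigma.fst)) K,
            (τ.map fun j => qf p j ^ t).prod
        ≤ (pP p ω ^ t * aP a ω ^ s) *
            (max (b j2 ^ (-θ)) 1 * (aP a ω / bP b (ω.map Sigma.fst)) ^ (-θ)) :=
          mul_le_mul_of_nonneg_left hib (hfac ω)
    _ = max (b j2 ^ (-θ)) 1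
          * (ω.map fun g => p g ^ t * (a g ^ (s - θ) * b g.1 ^ θ)).prod := by
          rw [← hφ ω hω]; ring

end Aux4
section Aux5

open Filter Topology

lemma exists_unique_weight {ι : Type*} [Fintype ι] [Nonempty ι] (c r : ι → ℝ)
    (hc : ∀ i, 0 < c i) (hr0 : ∀ i, 0 < r i) (hr1 : ∀ i, r i < 1) :
    ∃! e : ℝ, ∑ i, c i * r i ^ e = 1 := by
  have hlog : ∀ i, Real.log (r i) < 0 := fun i => Real.log_neg (hr0 i) (hr1 i)
  set f : ℝ → ℝ := fun e => ∑ i, c i * r i ^ e with hf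
  have hfe : ∀ (e : ℝ) (i : ι), r i ^ e = Real.exp (Real.log (r i) * e) := fun e i => by
    rw [Real.rpow_def_of_pos (hr0 i)]
  have hanti : StrictAnti f := by
    intro e e' h
    apply Finset.sum_lt_sum_of_nonempty Finset.univ_nonempty
    intro i _
    exact mul_lt_mul_of_pos_left (Real.rpow_lt_rpow_of_exponent_gt (hr0 i) (hr1 i) h) (hc i)
  have hcont : Continuous f := by
    apply continuous_finset_sum
    intro i _
    have he : (fun e : ℝ => c i * r i ^ e) = fun e => c i * Real.exp (Real.log (r i) * e) := by
      funext e; rw [hfe]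
    rw [he]
    exact continuous_const.mul (Real.continuous_exp.comp (continuous_const.mul continuous_id))
  have htop : Tendsto f atTop (𝓝 0) := by
    have hterm : ∀ i : ι, Tendsto (fun e : ℝ => c i * r i ^ e) atTop (𝓝 0) := by
      intro i
      have h1 : Tendsto (fun e : ℝ => Real.log (r i) * e) atTop atBot :=
        tendsto_id.const_mul_atTop_of_neg (hlog i)
      have h2 : Tendsto (fun e : ℝ => r i ^ e) atTop (𝓝 0) := by
        have h3 := Real.tendsto_exp_atBot.comp h1
        have he : (fun e : ℝ => r i ^ e) = fun e => Real.exp (Real.log (r i) * e) :=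
          funext fun e => hfe e i
        rw [he]; exact h3
      simpa using h2.const_mul (c i)
    have h4 := tendsto_finset_sum Finset.univ (fun i (_ : i ∈ Finset.univ) => hterm i)
    rw [hf]
    simpa using h4
  have hbot : Tendsto f atBot atTop := by
    obtain ⟨i0⟩ := (inferInstance : Nonempty ι)
    have h1 : Tendsto (fun e : ℝ => Real.log (r i0) * e) atBot atTop :=
      tendsto_id.const_mul_atBot_of_neg (hlog i0)
    have h2 := Real.tendsto_exp_atTop.comp h1
    have h3 : Tendsto (fun e : ℝ => c i0 * r i0 ^ e) atBot atTop := by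
      have he : (fun e : ℝ => c i0 * r i0 ^ e)
          = fun e => c i0 * Real.exp (Real.log (r i0) * e) := by
        funext e; rw [hfe]
      rw [he]
      exact h2.const_mul_atTop (hc i0)
    rw [hf]
    apply tendsto_atTop_mono ?_ h3
    intro e
    exact Finset.single_le_sum (f := fun i => c i * r i ^ e)
      (fun i _ => mul_nonneg (hc i).le (Real.rpow_pos_of_pos (hr0 i) e).le)
      (Finset.mem_univ i0)
  obtain ⟨e2, he2⟩ := (htop.eventually_lt_const one_pos).exists
  obtain ⟨e1, he1⟩ := (hbot.eventually_gt_atTop 1).exists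
  have he12 : e1 ≤ e2 := by
    by_contra hcon
    push_neg at hcon
    have := hanti hcon
    linarith
  obtain ⟨e0, -, he0⟩ := intermediate_value_Icc' he12 hcont.continuousOn ⟨he2.le, he1.le⟩
  exact ⟨e0, he0, fun y hy => hanti.injective (hy.trans he0.symm)⟩

lemma tendsto_logUps {m : ℕ} {n : Fin m → ℕ} {a : Alph m n → ℝ} {b : Fin m → ℝ}
    {p : Alph m n → ℝ} (hm : 0 < m) (hn : ∀ j, 1 ≤ n j)
    (hab : ∀ g : Alph m n, 0 < a g ∧ a g < b g.1 ∧ b g.1 < 1)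
    (hp : ∀ g, 0 < p g) (t s θ : ℝ)
    (hθ : ∑ j, qf p j ^ t * b j ^ θ = 1) :
    Tendsto (fun N : ℕ => Real.log (Ups a b p N t s) / N) atTop
      (𝓝 (Real.log (∑ g, p g ^ t * (a g ^ (s - θ) * b g.1 ^ θ)))) := by
  obtain ⟨C1, C2, hC1, hC2, hbd⟩ := Ups_bounds hm hn hab hp t s θ hθ
  set Φ := ∑ g, p g ^ t * (a g ^ (s - θ) * b g.1 ^ θ) with hΦdef
  have hΦ : 0 < Φ := by
    haveI : Nonempty (Alph m n) := ⟨⟨⟨0, hm⟩, ⟨0, hn _⟩⟩⟩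
    apply Finset.sum_pos (fun g _ => ?_) Finset.univ_nonempty
    exact mul_pos (Real.rpow_pos_of_pos (hp g) t)
      (mul_pos (Real.rpow_pos_of_pos (hab g).1 _)
        (Real.rpow_pos_of_pos (lt_trans (hab g).1 (hab g).2.1) θ))
  have hU0 : ∀ N, 0 < Ups a b p N t s := fun N =>
    lt_of_lt_of_le (mul_pos hC1 (pow_pos hΦ N)) (hbd N).1
  have hglim : Tendsto (fun N : ℕ => Real.log C1 / N + Real.log Φ) atTop
      (𝓝 (Real.log Φ)) := by
    have := (tendsto_const_div_atTop_nhds_zero_nat (Real.log C1)).add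
      (tendsto_const_nhds (x := Real.log Φ) (f := atTop))
    simpa using this
  have hhlim : Tendsto (fun N : ℕ => Real.log C2 / N + Real.log Φ) atTop
      (𝓝 (Real.log Φ)) := by
    have := (tendsto_const_div_atTop_nhds_zero_nat (Real.log C2)).add
      (tendsto_const_nhds (x := Real.log Φ) (f := atTop))
    simpa using this
  apply tendsto_of_tendsto_of_tendsto_of_le_of_le' hglim hhlim
  · filter_upwards [Filter.eventually_gt_atTop 0] with N hN
    have hN0 : (0:ℝ) < N := by exact_mod_cast hN
    have hlog : Real.log C1 + N * Real.log Φ ≤ Real.log (Ups a b p N t s) := by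
      have h2 := Real.log_le_log (mul_pos hC1 (pow_pos hΦ N)) (hbd N).1
      rwa [Real.log_mul hC1.ne' (pow_pos hΦ N).ne', Real.log_pow] at h2
    have heq : Real.log C1 / N + Real.log Φ = (Real.log C1 + N * Real.log Φ) / N := by
      field_simp
    rw [heq]
    exact (div_le_div_iff_of_pos_right hN0).mpr hlog
  · filter_upwards [Filter.eventually_gt_atTop 0] with N hN
    have hN0 : (0:ℝ) < N := by exact_mod_cast hN
    have hlog : Real.log (Ups a b p N t s) ≤ Real.log C2 + N * Real.log Φ := by
      have h2 := Real.log_le_log (hU0 N) (hbd N).2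
      rwa [Real.log_mul hC2.ne' (pow_pos hΦ N).ne', Real.log_pow] at h2
    have heq : Real.log C2 / N + Real.log Φ = (Real.log C2 + N * Real.log Φ) / N := by
      field_simp
    rw [heq]
    exact (div_le_div_iff_of_pos_right hN0).mpr hlog

end Aux5

theorem stmt19
    (m : ℕ) (hm : 2 ≤ m) (n : Fin m → ℕ) (hn : ∀ j, 1 ≤ n j)
    (a : Alph m n → ℝ) (b : Fin m → ℝ)
    (hab : ∀ g : Alph m n, 0 < a g ∧ a g < b g.1 ∧ b g.1 < 1)
    (p : Alph m n → ℝ) (hp : ∀ g, 0 < p g) (hp1 : ∑ g : Alph m n, p g = 1) :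
    (∀ t : ℝ, 0 ≤ t → ∀ s : ℝ,
      ∃ L : ℝ, Tendsto (fun N : ℕ => Real.log (Ups a b p N t s) / N) atTop (𝓝 L)) ∧
    (∀ t : ℝ, 0 ≤ t →
      ∃! s : ℝ, Tendsto (fun N : ℕ => Real.log (Ups a b p N t s) / N) atTop (𝓝 0)) := by
  have hm0 : 0 < m := lt_of_lt_of_le two_pos hm
  haveI : Nonempty (Fin m) := ⟨⟨0, hm0⟩⟩
  haveI : Nonempty (Alph m n) := ⟨⟨⟨0, hm0⟩, ⟨0, hn _⟩⟩⟩
  have hq0 : ∀ j, 0 < qf p j := fun j =>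
    Finset.sum_pos (fun i _ => hp ⟨j, i⟩) ⟨⟨0, hn j⟩, Finset.mem_univ _⟩
  have hb0 : ∀ j, 0 < b j := fun j =>
    lt_trans (hab ⟨j, ⟨0, hn j⟩⟩).1 (hab ⟨j, ⟨0, hn j⟩⟩).2.1
  have hb1 : ∀ j, b j < 1 := fun j => (hab ⟨j, ⟨0, hn j⟩⟩).2.2
  constructor
  · intro t ht s
    obtain ⟨θ, hθ, -⟩ := exists_unique_weight (fun j => qf p j ^ t) b
      (fun j => Real.rpow_pos_of_pos (hq0 j) t) hb0 hb1
    exact ⟨_, tendsto_logUps hm0 hn hab hp t s θ hθ⟩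
  · intro t ht
    obtain ⟨θ, hθ, -⟩ := exists_unique_weight (fun j => qf p j ^ t) b
      (fun j => Real.rpow_pos_of_pos (hq0 j) t) hb0 hb1
    obtain ⟨s0, hs0, huniq⟩ := exists_unique_weight
      (fun g : Alph m n => p g ^ t * (a g ^ (-θ) * b g.1 ^ θ)) a
      (fun g => mul_pos (Real.rpow_pos_of_pos (hp g) t)
        (mul_pos (Real.rpow_pos_of_pos (hab g).1 _)
          (Real.rpow_pos_of_pos (hb0 g.1) θ)))
      (fun g => (hab g).1) (fun g => lt_trans (hab g).2.1 (hab g).2.2)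
    have hrel : ∀ s : ℝ, (∑ g, p g ^ t * (a g ^ (s - θ) * b g.1 ^ θ))
        = ∑ g, (p g ^ t * (a g ^ (-θ) * b g.1 ^ θ)) * a g ^ s := by
      intro s
      apply Finset.sum_congr rfl
      intro g _
      have he : a g ^ (s - θ) = a g ^ s * a g ^ (-θ) := by
        rw [sub_eq_add_neg, Real.rpow_add (hab g).1]
      rw [he]; ring
    have hΦpos : ∀ s : ℝ, 0 < ∑ g, p g ^ t * (a g ^ (s - θ) * b g.1 ^ θ) := by
      intro s
      apply Finset.sum_pos (fun g _ => ?_) Finset.univ_nonempty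
      exact mul_pos (Real.rpow_pos_of_pos (hp g) t)
        (mul_pos (Real.rpow_pos_of_pos (hab g).1 _)
          (Real.rpow_pos_of_pos (hb0 g.1) θ))
    refine ⟨s0, ?_, ?_⟩
    · have h := tendsto_logUps hm0 hn hab hp t s0 θ hθ
      have h1 : (∑ g, p g ^ t * (a g ^ (s0 - θ) * b g.1 ^ θ)) = 1 := by
        rw [hrel s0]; exact hs0
      rwa [h1, Real.log_one] at h
    · intro s hs
      have h := tendsto_logUps hm0 hn hab hp t s θ hθ
      have hlim := tendsto_nhds_unique hs h
      have hΦ1 : (∑ g, p g ^ t * (a g ^ (s - θ) * b g.1 ^ θ)) = 1 := by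
        have hexp := Real.exp_log (hΦpos s)
        rw [← hlim, Real.exp_zero] at hexp
        exact hexp.symm
      refine huniq s ?_
      show (∑ g, (p g ^ t * (a g ^ (-θ) * b g.1 ^ θ)) * a g ^ s) = 1
      rw [← hrel s]
      exact hΦ1


end

end LGQ
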